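/- Let n ≥ 2 be an integer, P = O × I ⊂ ℝⁿ with O ⊂ ℝ^{n−1} an open cube of side length l > 0 and I ⊂ ℝ an interval of length h > 0, and 1 ≤ p < ∞. Then there exists a constant C > 0 depending only on n and p such that for all rotations R₁, R₂ ∈ SO(n) and all translation vectors d ∈ ℝⁿ: ∫_P |(R₂ − R₁)x + d|^p dx ≥ C l^p |P| |R₂ − R₁|^p. -/

import Mathlib

open MeasureTheory Filter Topology Set
open scoped ENNReal

noncomputable section

namespace LayeredRigidity

abbrev Vec (n : ℕ) := EuclideanSpace ℝ (Fin n)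
abbrev Mat (n : ℕ) := Matrix (Fin n) (Fin n) ℝ

/-- Interpret a plain function `Fin n → ℝ` as an element of Euclidean space. -/
def toVec {n : ℕ} (f : Fin n → ℝ) : Vec n := WithLp.toLp 2 f

/-- The last coordinate `x_n` of a vector. -/
def coordLast {n : ℕ} (x : Vec n) : ℝ :=
  if h : 0 < n then x ⟨n - 1, Nat.sub_lt h Nat.one_pos⟩ else 0

/-- The first coordinate `x_1` of a vector. -/
def coord0 {n : ℕ} (x : Vec n) : ℝ := if h : 0 < n then x ⟨0, h⟩ else 0

/-- Standard basis vector `e_j`. -/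
def bas {n : ℕ} (j : Fin n) : Vec n := EuclideanSpace.single j 1

/-- The last standard basis vector `e_n`, as a plain function. -/
def eL {n : ℕ} : Fin n → ℝ := fun j => if (j : ℕ) + 1 = n then 1 else 0

/-- The last standard basis vector `e_n`. -/
def eLast {n : ℕ} : Vec n := toVec eL

/-- The first standard basis vector `e_1`. -/
def eFirst {n : ℕ} : Vec n := toVec (fun j => if (j : ℕ) = 0 then 1 else 0)

/-- Replace the last coordinate of `x` by `t`. -/
def setLast {n : ℕ} (x : Vec n) (t : ℝ) : Vec n :=
  toVec (fun j => if (j : ℕ) + 1 = n then t else x j)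

/-- Frobenius norm of a matrix. -/
def frob {n : ℕ} (F : Mat n) : ℝ := Real.sqrt (∑ i, ∑ j, (F i j) ^ 2)

/-- The special orthogonal group `SO(n)`, as a set of matrices. -/
def SO (n : ℕ) : Set (Mat n) := {F | F * F.transpose = 1 ∧ F.det = 1}

/-- Frobenius distance of a matrix to `SO(n)`. -/
def distSO {n : ℕ} (F : Mat n) : ℝ := sInf ((fun Q => frob (F - Q)) '' SO n)

/-- Matrix-vector multiplication, landing in Euclidean space. -/
def matVec {n : ℕ} (A : Mat n) (x : Vec n) : Vec n := toVec (fun i => ∑ j, A i j * x j)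

/-- Outer product `v ⊗ w = v wᵀ`. -/
def outerM {n : ℕ} (v w : Fin n → ℝ) : Mat n := Matrix.of fun i j => v i * w j

/-- The `e_n`-directional component of a direction-indexed family (i.e. `v (n-1)`). -/
def lastOf {α : Type*} [AddCommMonoid α] {n : ℕ} (v : Fin n → α) : α :=
  ∑ j : Fin n, if (j : ℕ) + 1 = n then v j else 0

/-- The (periodically extended, `ε`-dilated) stiff layers `ε Y_stiff ⊆ ℝⁿ`. -/
def stiffLayers {n : ℕ} (lam ε : ℝ) : Set (Vec n) :=
  {x | (⌈coordLast x / ε⌉ : ℝ) - coordLast x / ε ≤ 1 - lam}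

/-- The (periodically extended, `ε`-dilated) soft layers `ε Y_soft ⊆ ℝⁿ`. -/
def softLayers {n : ℕ} (lam ε : ℝ) : Set (Vec n) :=
  {x | 1 - lam < (⌈coordLast x / ε⌉ : ℝ) - coordLast x / ε}

/-- One-dimensional stiff layers `ε I_stiff ⊆ ℝ`. -/
def stiff1D (lam ε : ℝ) : Set ℝ := {t | (⌈t / ε⌉ : ℝ) - t / ε ≤ 1 - lam}

/-- One-dimensional soft layers `ε I_soft ⊆ ℝ`. -/
def soft1D (lam ε : ℝ) : Set ℝ := {t | 1 - lam < (⌈t / ε⌉ : ℝ) - t / ε}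

/-- A set is cross-section connected if all its horizontal cross-sections are connected. -/
def CrossSectionConnected {n : ℕ} (Ω : Set (Vec n)) : Prop :=
  ∀ t : ℝ, IsPreconnected {x ∈ Ω | coordLast x = t}

/-- A set is flat if every nonempty horizontal cross-section of its closure has nonempty
relative interior in the corresponding hyperplane. -/
def Flat {n : ℕ} (Ω : Set (Vec n)) : Prop :=
  ∀ t : ℝ, (closure Ω ∩ {x | coordLast x = t}).Nonempty →
    ∃ x ∈ closure Ω ∩ {x | coordLast x = t}, ∃ r > (0 : ℝ),
      Metric.ball x r ∩ {y | coordLast y = t} ⊆ closure Ω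

/-- A Lipschitz domain: an open nonempty set whose boundary is locally, after an isometry of the
ambient space, the graph of a Lipschitz function with the set lying on one side. -/
def IsLipschitzDomain {n : ℕ} (Ω : Set (Vec n)) : Prop :=
  IsOpen Ω ∧ Ω.Nonempty ∧
  ∀ x ∈ frontier Ω, ∃ e : Vec n ≃ᵢ Vec n, ∃ K : NNReal, ∃ f : Vec n → ℝ, ∃ r : ℝ,
    0 < r ∧ LipschitzWith K f ∧
    ∀ y ∈ Metric.ball x r, (y ∈ Ω ↔ f (setLast (e y) 0) < coordLast (e y))

/-- Componentwise membership in `L^p(Ω)`. -/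
def LpFn {n : ℕ} {ι : Type*} (Ω : Set (Vec n)) (p : ℝ) (u : Vec n → ι → ℝ) : Prop :=
  ∀ i, MemLp (fun x => u x i) (ENNReal.ofReal p) (volume.restrict Ω)

/-- `G` is the weak (distributional) derivative of `u` on `Ω`:
integration by parts against smooth compactly supported test functions. -/
def IsWeakDeriv {n : ℕ} {ι : Type*} (Ω : Set (Vec n)) (u : Vec n → ι → ℝ)
    (G : Vec n → ι → Fin n → ℝ) : Prop :=
  ∀ φ : Vec n → ℝ, ContDiff ℝ (⊤ : ℕ∞) φ → HasCompactSupport φ → tsupport φ ⊆ Ω →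
    ∀ i j, ∫ x in Ω, u x i * fderiv ℝ φ x (bas j) = - ∫ x in Ω, G x i j * φ x

/-- Membership in the Sobolev space `W^{1,p}(Ω)`, with explicit weak derivative `G`. -/
def SobolevFn {n : ℕ} {ι : Type*} (Ω : Set (Vec n)) (p : ℝ) (u : Vec n → ι → ℝ)
    (G : Vec n → ι → Fin n → ℝ) : Prop :=
  LpFn Ω p u ∧ LpFn Ω p (fun x (ij : ι × Fin n) => G x ij.1 ij.2) ∧ IsWeakDeriv Ω u G

/-- `W^{1,p}(Ω;ℝⁿ)` for vector-valued maps, with gradient matrix `Du` (`(Du)_{ij} = ∂_j u_i`). -/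
def SobolevVec {n : ℕ} (Ω : Set (Vec n)) (p : ℝ) (u : Vec n → Vec n)
    (Du : Vec n → Mat n) : Prop :=
  SobolevFn Ω p (fun x i => u x i) (fun x i j => Du x i j)

/-- `W^{1,p}(Ω;ℝ^{n×n})` for matrix-valued maps; `DR x j` is the partial derivative `∂_j R`. -/
def SobolevMat {n : ℕ} (Ω : Set (Vec n)) (p : ℝ) (R : Vec n → Mat n)
    (DR : Vec n → Fin n → Mat n) : Prop :=
  SobolevFn Ω p (fun x (ij : Fin n × Fin n) => R x ij.1 ij.2) (fun x ij j => DR x j ij.1 ij.2)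

/-- The conjugate exponent of `p`, as an extended real. -/
def conjE (p : ℝ) : ℝ≥0∞ := if p = 1 then ⊤ else ENNReal.ofReal (p / (p - 1))

/-- Weak convergence in `L^p(Ω)` of a family indexed by `ε > 0`, as `ε → 0`:
testing componentwise against all `L^{p'}` functions. -/
def WeakLpFam {n : ℕ} {ι : Type*} (Ω : Set (Vec n)) (p : ℝ) (f : ℝ → Vec n → ι → ℝ)
    (g : Vec n → ι → ℝ) : Prop :=
  ∀ φ : Vec n → ℝ, MemLp φ (conjE p) (volume.restrict Ω) →
    ∀ i, Tendsto (fun ε => ∫ x in Ω, f ε x i * φ x) (𝓝[>] (0 : ℝ))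
      (𝓝 (∫ x in Ω, g x i * φ x))

/-- Strong convergence in `L^p(Ω)` of a family indexed by `ε > 0`, as `ε → 0`. -/
def StrongLpFam {n : ℕ} {ι : Type*} (Ω : Set (Vec n)) (p : ℝ) (f : ℝ → Vec n → ι → ℝ)
    (g : Vec n → ι → ℝ) : Prop :=
  ∀ i, Tendsto (fun ε => ∫ x in Ω, |f ε x i - g x i| ^ p) (𝓝[>] (0 : ℝ)) (𝓝 0)

/-- One-dimensional Sobolev space `W^{1,p}(J)` with explicit weak derivative. -/
def Sobolev1D {ι : Type*} (J : Set ℝ) (p : ℝ) (ν ν' : ℝ → ι → ℝ) : Prop :=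
  (∀ i, MemLp (fun t => ν t i) (ENNReal.ofReal p) (volume.restrict J)) ∧
  (∀ i, MemLp (fun t => ν' t i) (ENNReal.ofReal p) (volume.restrict J)) ∧
  ∀ φ : ℝ → ℝ, ContDiff ℝ (⊤ : ℕ∞) φ → HasCompactSupport φ → tsupport φ ⊆ J →
    ∀ i, ∫ t in J, ν t i * deriv φ t = - ∫ t in J, ν' t i * φ t

/-- The open unit cube `(0,1)ⁿ`. -/
def unitCube (n : ℕ) : Set (Vec n) := {x | ∀ i, x i ∈ Set.Ioo (0 : ℝ) 1}

/-- The gradient matrix of a (differentiable) map, `(∇φ)_{ij} = ∂_j φ_i`. -/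
def gradMat {n : ℕ} (φ : Vec n → Vec n) (x : Vec n) : Mat n :=
  Matrix.of fun i j => fderiv ℝ φ x (bas j) i

/-- The quasiconvex envelope of `W`, via the infimum over smooth compactly supported
perturbations on the unit cube (which has measure one). -/
def qcEnv {n : ℕ} (W : Mat n → ℝ) (F : Mat n) : ℝ :=
  sInf {v : ℝ | ∃ φ : Vec n → Vec n, ContDiff ℝ (⊤ : ℕ∞) φ ∧ tsupport φ ⊆ unitCube n ∧
    v = ∫ x in unitCube n, W (F + gradMat φ x)}

/-- The minor of `F` with rows `s` and columns `t`. -/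
def minor {n : ℕ} (F : Mat n) (s t : Finset (Fin n)) (h : t.card = s.card) : ℝ :=
  Matrix.det (Matrix.of fun i j : Fin s.card =>
    F (s.orderIsoOfFin rfl i).1 (t.orderIsoOfFin h j).1)

/-- Index type enumerating all minors of an `n × n` matrix. -/
def MinorIdx (n : ℕ) := {q : Finset (Fin n) × Finset (Fin n) // q.2.card = q.1.card}

/-- The vector of all minors of a matrix. -/
def minors {n : ℕ} (F : Mat n) : MinorIdx n → ℝ := fun q => minor F q.1.1 q.1.2 q.2

/-- A function of matrices is polyconvex if it is a convex function of the vector of minors. -/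
def Polyconvex {n : ℕ} (W : Mat n → ℝ) : Prop :=
  ∃ g : (MinorIdx n → ℝ) → ℝ, ConvexOn ℝ Set.univ g ∧ ∀ F, W F = g (minors F)

/-- The set `𝒜` of matrices of the form `R + d ⊗ e_n` with `R ∈ SO(n)`. -/
def Astar (n : ℕ) : Set (Mat n) := {F | ∃ R ∈ SO n, ∃ d : Fin n → ℝ, F = R + outerM d eL}

end LayeredRigidity

namespace LayeredRigidity

lemma diag_le_one {n : ℕ} {M : Mat n} (h : M * M.transpose = 1) (i : Fin n) : M i i ≤ 1 := by
  have h1 : ∑ k, M i k * M i k = 1 := by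
    have := congrFun (congrFun h i) i
    simpa [Matrix.mul_apply, Matrix.transpose_apply, Matrix.one_apply] using this
  nlinarith [Finset.single_le_sum (f := fun k => M i k * M i k)
    (fun k _ => mul_self_nonneg (M i k)) (Finset.mem_univ i), sq_nonneg (M i i - 1)]

lemma trace_le_of_det_neg {n : ℕ} {M : Mat n} (h : M * M.transpose = 1) (hd : M.det = -1) :
    Matrix.trace M ≤ (n : ℝ) - 2 := by
  have hdet : (1 + M).det = 0 := by
    have h1 : M * (1 + M.transpose) = 1 + M := by
      rw [mul_add, mul_one, h, add_comm]
    have h2 : (1 + M).det = M.det * (1 + M.transpose).det := by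
      rw [← Matrix.det_mul, h1]
    have h3 : (1 + M.transpose).det = (1 + M).det := by
      rw [show (1 : Mat n) + M.transpose = (1 + M).transpose by simp, Matrix.det_transpose]
    rw [h3, hd] at h2
    linarith
  obtain ⟨v, hv0, hv⟩ := Matrix.exists_mulVec_eq_zero_iff.2 hdet
  have hMv : M.mulVec v = -v := by
    have := hv
    rw [Matrix.add_mulVec, Matrix.one_mulVec] at this
    have : M.mulVec v = -v := by
      funext i; have := congrFun this i; simp at this ⊢; linarith [this]
    exact this
  set c : ℝ := ∑ k, v k ^ 2 with hc
  have hcpos : 0 < c := by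
    rcases Function.ne_iff.1 hv0 with ⟨i, hi⟩
    have hi' : v i ≠ 0 := by simpa using hi
    exact Finset.sum_pos' (fun k _ => sq_nonneg _) ⟨i, Finset.mem_univ i, by positivity⟩
  set P : Mat n := Matrix.of (fun i j => v i * v j) with hP
  have hPt : P.transpose = P := by ext i j; simp [hP, Matrix.transpose_apply, mul_comm]
  have hPP : P * P = c • P := by
    ext i j
    simp only [hP, Matrix.mul_apply, Matrix.of_apply, Matrix.smul_apply, smul_eq_mul, hc]
    rw [Finset.sum_mul]
    exact Finset.sum_congr rfl fun k _ => by ring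
  set a : ℝ := 2 / c with ha
  set N : Mat n := M * (1 - a • P) with hN
  have hS : (1 - a • P) * (1 - a • P) = 1 := by
    have e1 : ((1 : Mat n) - a • P) * (1 - a • P) = 1 - a • P - (a • P - (a*a) • (P*P)) := by
      rw [sub_mul, one_mul, mul_sub, mul_one, Matrix.smul_mul, Matrix.mul_smul, smul_smul]
    have e2 : a * a * c = 2 * a := by rw [ha, mul_assoc, div_mul_cancel₀ _ hcpos.ne']; ring
    rw [e1, hPP, smul_smul, e2, two_mul, add_smul]
    abel
  have hNN : N * N.transpose = 1 := by
    rw [hN, Matrix.transpose_mul, Matrix.transpose_sub, Matrix.transpose_smul, hPt,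
      Matrix.transpose_one, ← mul_assoc, mul_assoc M, hS, mul_one, h]
  have htrMP : Matrix.trace (M * P) = -c := by
    rw [Matrix.trace]
    have : ∀ i, (M * P).diag i = (-v i) * v i := by
      intro i
      simp only [Matrix.diag, Matrix.mul_apply, hP, Matrix.of_apply]
      have h1 : (M.mulVec v) i = -v i := congrFun hMv i
      rw [show ∑ k, M i k * (v k * v i) = (∑ k, M i k * v k) * v i by rw [Finset.sum_mul]; exact Finset.sum_congr rfl fun k _ => by ring]
      rw [show ∑ k, M i k * v k = (M.mulVec v) i from rfl, h1]
    rw [Finset.sum_congr rfl fun i _ => this i]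
    simp [hc]
    rw [Finset.sum_congr rfl (fun i _ => by ring : ∀ i ∈ Finset.univ, v i * v i = v i ^ 2)]
  have htrN : Matrix.trace N = Matrix.trace M + 2 := by
    rw [hN, mul_sub, mul_one, Matrix.mul_smul, Matrix.trace_sub, Matrix.trace_smul, htrMP,
      smul_eq_mul, ha]
    field_simp
    ring
  have hNle : Matrix.trace N ≤ (n : ℝ) := by
    rw [Matrix.trace]
    calc ∑ i, N.diag i ≤ ∑ _i : Fin n, (1:ℝ) := Finset.sum_le_sum fun i _ => diag_le_one hNN i
    _ = n := by simp
  linarith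

lemma exists_good_column {n : ℕ} (hn : 2 ≤ n) {R₁ R₂ : Mat n} (h1 : R₁ ∈ SO n)
    (h2 : R₂ ∈ SO n) :
    ∃ j₀ : Fin n, (j₀ : ℕ) < n - 1 ∧
      frob (R₂ - R₁) ^ 2 ≤ 2 * (n - 1) * ∑ i, ((R₂ - R₁) i j₀) ^ 2 := by
  obtain ⟨h1o, h1d⟩ := h1
  obtain ⟨h2o, h2d⟩ := h2
  have h1o' : R₁.transpose * R₁ = 1 := mul_eq_one_comm.1 h1o
  have h2o' : R₂.transpose * R₂ = 1 := mul_eq_one_comm.1 h2o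
  set Q : Mat n := R₁.transpose * R₂ with hQ
  have hQo : Q * Q.transpose = 1 := by
    rw [hQ, Matrix.transpose_mul, Matrix.transpose_transpose, mul_assoc, ← mul_assoc R₂, h2o,
      one_mul, h1o']
  have hQd : Q.det = 1 := by
    rw [hQ, Matrix.det_mul, Matrix.det_transpose, h1d, h2d, one_mul]
  have hnpos : 0 < n := by omega
  set l : Fin n := ⟨n - 1, Nat.sub_lt hnpos Nat.one_pos⟩ with hl
  -- trace inequality
  set S : Mat n := Matrix.diagonal (fun i => if i = l then (-1 : ℝ) else 1) with hS
  have hSS : S * S.transpose = 1 := by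
    rw [hS, Matrix.diagonal_transpose, Matrix.diagonal_mul_diagonal]
    ext i j
    rcases eq_or_ne i j with rfl | hij
    · rcases eq_or_ne i l with rfl | hil
      · simp [Matrix.diagonal_apply_eq, Matrix.one_apply]
      · simp [Matrix.diagonal_apply_eq, Matrix.one_apply, hil]
    · simp [Matrix.diagonal_apply_ne _ hij, Matrix.one_apply_ne hij]
  set M : Mat n := Q * S with hM
  have hMo : M * M.transpose = 1 := by
    rw [hM, Matrix.transpose_mul, ← mul_assoc, mul_assoc Q, hSS, mul_one, hQo]
  have hMd : M.det = -1 := by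
    rw [hM, Matrix.det_mul, hQd, one_mul, hS, Matrix.det_diagonal]
    rw [Finset.prod_eq_single l (fun b _ hb => by simp [hb]) (by simp)]
    simp
  have htr := trace_le_of_det_neg hMo hMd
  have htrM : Matrix.trace M = Matrix.trace Q - 2 * Q l l := by
    rw [Matrix.trace, Matrix.trace]
    have : ∀ i, M.diag i = Q.diag i - 2 * (if i = l then Q i i else 0) := by
      intro i
      simp only [Matrix.diag, hM, hS, Matrix.mul_diagonal]
      by_cases hi : i = l <;> simp [hi] <;> ring
    rw [Finset.sum_congr rfl fun i _ => this i, Finset.sum_sub_distrib, ← Finset.mul_sum,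
      Finset.sum_ite_eq' Finset.univ l (fun i => Q i i)]
    simp
  have key : Matrix.trace Q - 2 * Q l l ≤ (n : ℝ) - 2 := htrM ▸ htr
  -- column norms
  set c : Fin n → ℝ := fun j => ∑ i, ((R₂ - R₁) i j) ^ 2 with hcdef
  have hcol : ∀ j, c j = 2 - 2 * Q j j := by
    intro j
    have e1 : ∑ i, R₁ i j ^ 2 = 1 := by
      have := congrFun (congrFun h1o' j) j
      simp only [Matrix.mul_apply, Matrix.transpose_apply, Matrix.one_apply_eq] at this
      rw [← this]
      exact Finset.sum_congr rfl fun i _ => (sq (R₁ i j)).symm ▸ by ring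
    have e2 : ∑ i, R₂ i j ^ 2 = 1 := by
      have := congrFun (congrFun h2o' j) j
      simp only [Matrix.mul_apply, Matrix.transpose_apply, Matrix.one_apply_eq] at this
      rw [← this]
      exact Finset.sum_congr rfl fun i _ => by ring
    have e3 : Q j j = ∑ i, R₁ i j * R₂ i j := by
      simp [hQ, Matrix.mul_apply, Matrix.transpose_apply]
    have expand : ∀ i, ((R₂ - R₁) i j) ^ 2 = R₂ i j ^ 2 + R₁ i j ^ 2 - 2 * (R₁ i j * R₂ i j) :=
      fun i => by simp [Matrix.sub_apply]; ring
    rw [hcdef]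
    simp only []
    rw [Finset.sum_congr rfl fun i _ => expand i, Finset.sum_sub_distrib,
      Finset.sum_add_distrib, e1, e2, ← Finset.mul_sum, ← e3]
    ring
  have hfrob : frob (R₂ - R₁) ^ 2 = ∑ j, c j := by
    rw [frob, Real.sq_sqrt (Finset.sum_nonneg fun i _ => Finset.sum_nonneg fun j _ => sq_nonneg ((R₂ - R₁) i j))]
    rw [Finset.sum_comm]
  have hsum : ∑ j, c j = 2 * n - 2 * Matrix.trace Q := by
    rw [Finset.sum_congr rfl fun j _ => hcol j, Finset.sum_sub_distrib, ← Finset.mul_sum,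
      Matrix.trace]
    simp [Matrix.diag, mul_comm]
  have hcl : c l ≤ (∑ j, c j) / 2 := by
    rw [hsum, hcol]
    linarith
  have hrest : (∑ j, c j) / 2 ≤ ∑ j ∈ Finset.univ.erase l, c j := by
    have := Finset.sum_erase_add Finset.univ c (Finset.mem_univ l)
    linarith
  have hcard : (Finset.univ.erase l).card = n - 1 := by
    rw [Finset.card_erase_of_mem (Finset.mem_univ l), Finset.card_univ, Fintype.card_fin]
  have hne : (Finset.univ.erase l).Nonempty := by
    rw [← Finset.card_pos, hcard]; omega
  obtain ⟨j₀, hj₀mem, hj₀⟩ := Finset.exists_le_of_sum_le (f := fun _ => (∑ j, c j) / 2 / (n - 1))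
    (g := c) hne (by
      rw [Finset.sum_const, hcard, nsmul_eq_mul]
      have hn1 : ((n : ℝ) - 1) ≠ 0 := by
        have : (2:ℝ) ≤ n := by exact_mod_cast hn
        linarith
      have : ((n - 1 : ℕ) : ℝ) = (n : ℝ) - 1 := by
        have : (1:ℕ) ≤ n := by omega
        push_cast [this]; ring
      rw [this, mul_div_cancel₀ _ hn1]
      exact hrest)
  refine ⟨j₀, ?_, ?_⟩
  · have hj₀ne : j₀ ≠ l := Finset.ne_of_mem_erase hj₀mem
    have : (j₀ : ℕ) ≠ n - 1 := fun hc => hj₀ne (Fin.ext hc)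
    have := j₀.isLt
    omega
  · rw [hfrob]
    have hn1 : (0:ℝ) < (n : ℝ) - 1 := by
      have : (2:ℝ) ≤ n := by exact_mod_cast hn
      linarith
    have h2 : (∑ j, c j) / 2 / (n - 1) ≤ c j₀ := hj₀
    calc ∑ j, c j = 2 * ((n:ℝ) - 1) * ((∑ j, c j) / 2 / ((n:ℝ)-1)) := by field_simp
    _ ≤ 2 * ((n:ℝ) - 1) * c j₀ := by
        apply mul_le_mul_of_nonneg_left h2; positivity

lemma scalar_lintegral (p : ℝ) (hp : 1 ≤ p) (c s α l : ℝ) (hl : 0 < l) (hc : 0 ≤ c) :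
    ENNReal.ofReal ((l / 4) * ((l / 4) * c) ^ p) ≤
      ∫⁻ t in Ioo α (α + l), ENNReal.ofReal (|t * c + s| ^ p) := by
  have hp0 : 0 ≤ p := by linarith
  -- choose a subinterval of length l/4 on which |t*c+s| ≥ (l/4)*c
  obtain ⟨β, hsub, hbd⟩ : ∃ β : ℝ, Ioo β (β + l / 4) ⊆ Ioo α (α + l) ∧
      ∀ t ∈ Ioo β (β + l / 4), (l / 4) * c ≤ |t * c + s| := by
    rcases le_or_gt 0 ((α + l / 2) * c + s) with hm | hm
    · refine ⟨α + 3 * l / 4, fun t ht => ⟨by linarith [ht.1], by linarith [ht.2]⟩, ?_⟩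
      intro t ht
      have h1 : (l / 4) * c ≤ (t - (α + l / 2)) * c :=
        mul_le_mul_of_nonneg_right (by linarith [ht.1]) hc
      have h2 : t * c + s = ((α + l / 2) * c + s) + (t - (α + l / 2)) * c := by ring
      have h3 : (0:ℝ) ≤ l / 4 * c := by positivity
      rw [h2, abs_of_nonneg (by linarith)]
      linarith
    · refine ⟨α, fun t ht => ⟨ht.1, by linarith [ht.2]⟩, ?_⟩
      intro t ht
      have h1 : (t - (α + l / 2)) * c ≤ -(l / 4) * c :=
        mul_le_mul_of_nonneg_right (by linarith [ht.2]) hc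
      have h2 : t * c + s = ((α + l / 2) * c + s) + (t - (α + l / 2)) * c := by ring
      have hneg : t * c + s ≤ -((l / 4) * c) := by rw [h2]; linarith
      rw [abs_of_nonpos (by nlinarith)]
      linarith
  calc ENNReal.ofReal ((l / 4) * ((l / 4) * c) ^ p)
      = ENNReal.ofReal (((l / 4) * c) ^ p) * volume (Ioo β (β + l / 4)) := by
        rw [Real.volume_Ioo, show β + l / 4 - β = l / 4 by ring, ← ENNReal.ofReal_mul (by positivity),
          mul_comm]
    _ = ∫⁻ t in Ioo β (β + l / 4), ENNReal.ofReal (((l / 4) * c) ^ p) :=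
        (setLIntegral_const _ _).symm
    _ ≤ ∫⁻ t in Ioo β (β + l / 4), ENNReal.ofReal (|t * c + s| ^ p) := by
        apply setLIntegral_mono' measurableSet_Ioo
        intro t ht
        exact ENNReal.ofReal_le_ofReal
          (Real.rpow_le_rpow (by positivity) (hbd t ht) hp0)
    _ ≤ ∫⁻ t in Ioo α (α + l), ENNReal.ofReal (|t * c + s| ^ p) :=
        lintegral_mono_set hsub

lemma oneD_lintegral (p : ℝ) (hp : 1 ≤ p) {n : ℕ} (a b : Fin n → ℝ) (α l : ℝ) (hl : 0 < l) :
    ENNReal.ofReal ((l / 4) * ((l / 4) * Real.sqrt (∑ k, a k ^ 2)) ^ p) ≤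
      ∫⁻ t in Ioo α (α + l), ENNReal.ofReal (Real.sqrt (∑ k, (t * a k + b k) ^ 2) ^ p) := by
  set ca : ℝ := Real.sqrt (∑ k, a k ^ 2) with hca
  have hca0 : 0 ≤ ca := Real.sqrt_nonneg _
  rcases eq_or_lt_of_le hca0 with hca' | hca'
  · -- ca = 0 : LHS is 0
    have : (l / 4) * ((l / 4) * ca) ^ p = 0 := by
      rw [← hca', mul_zero, Real.zero_rpow (by linarith), mul_zero]
    rw [this, ENNReal.ofReal_zero]
    exact zero_le
  · set s : ℝ := (∑ k, a k * b k) / ca with hs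
    have hsq : ca ^ 2 = ∑ k, a k ^ 2 := Real.sq_sqrt (Finset.sum_nonneg fun k _ => sq_nonneg _)
    have key : ∀ t : ℝ, |t * ca + s| ≤ Real.sqrt (∑ k, (t * a k + b k) ^ 2) := by
      intro t
      have hcs : ca * (t * ca + s) = ∑ k, a k * (t * a k + b k) := by
        have e1 : ca * s = ∑ k, a k * b k := by
          rw [hs]; field_simp
        have e2 : ca * (t * ca + s) = t * ca ^ 2 + ca * s := by ring
        rw [e2, e1, hsq, Finset.mul_sum, ← Finset.sum_add_distrib]
        exact Finset.sum_congr rfl fun k _ => by ring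
      have hCS : |∑ k, a k * (t * a k + b k)| ≤
          ca * Real.sqrt (∑ k, (t * a k + b k) ^ 2) := by
        have h2 := Finset.sum_mul_sq_le_sq_mul_sq Finset.univ a (fun k => t * a k + b k)
        have := Real.sqrt_le_sqrt h2
        rw [Real.sqrt_sq_eq_abs] at this
        calc |∑ k, a k * (t * a k + b k)| ≤
            Real.sqrt ((∑ k, a k ^ 2) * ∑ k, (t * a k + b k) ^ 2) := this
          _ = ca * Real.sqrt (∑ k, (t * a k + b k) ^ 2) := by
            rw [Real.sqrt_mul (Finset.sum_nonneg fun k _ => sq_nonneg _), hca]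
      have e3 : ca * |t * ca + s| = |∑ k, a k * (t * a k + b k)| := by
        rw [← hcs, abs_mul, abs_of_pos hca']
      have : ca * |t * ca + s| ≤ ca * Real.sqrt (∑ k, (t * a k + b k) ^ 2) := by
        rw [e3]; exact hCS
      exact le_of_mul_le_mul_left this hca'
    calc ENNReal.ofReal ((l / 4) * ((l / 4) * ca) ^ p)
        ≤ ∫⁻ t in Ioo α (α + l), ENNReal.ofReal (|t * ca + s| ^ p) :=
          scalar_lintegral p hp ca s α l hl hca0
      _ ≤ ∫⁻ t in Ioo α (α + l), ENNReal.ofReal (Real.sqrt (∑ k, (t * a k + b k) ^ 2) ^ p) := by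
          apply lintegral_mono
          intro t
          exact ENNReal.ofReal_le_ofReal
            (Real.rpow_le_rpow (abs_nonneg _) (key t) (by linarith))

set_option maxHeartbeats 2000000 in
/-- Lemma A.1, reverse Poincaré inequality on thin cuboids: there is a
constant `C > 0` depending only on `n` and `p` such that for every cuboid
`P = O × I` (with `O` a cube of side `l` and `I` an interval of length `h`), all
`R₁, R₂ ∈ SO(n)` and all `d ∈ ℝⁿ`,
`∫_P |(R₂ − R₁)x + d|^p dx ≥ C l^p |P| |R₂ − R₁|^p`. -/
theorem statement18 {n : ℕ} (hn : 2 ≤ n) (p : ℝ) (hp : 1 ≤ p) :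
    ∃ C : ℝ, 0 < C ∧ ∀ (o : Fin n → ℝ) (l h : ℝ), 0 < l → 0 < h →
      ∀ R₁ ∈ SO n, ∀ R₂ ∈ SO n, ∀ d : Fin n → ℝ,
        C * l ^ p * (l ^ (n - 1) * h) * frob (R₂ - R₁) ^ p ≤
          ∫ x in {x : Vec n |
              (∀ i : Fin n, (i : ℕ) < n - 1 → x i ∈ Set.Ioo (o i) (o i + l)) ∧
              coordLast x ∈ Set.Ioo (o ⟨n - 1, by omega⟩) (o ⟨n - 1, by omega⟩ + h)},
            (Real.sqrt (∑ k, (matVec (R₂ - R₁) x k + d k) ^ 2)) ^ p := by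
  have hp0 : 0 ≤ p := by linarith
  obtain ⟨m, rfl⟩ : ∃ m, n = m + 1 := ⟨n - 1, by omega⟩
  have hm : 1 ≤ m := by omega
  have hmR : (1:ℝ) ≤ m := by exact_mod_cast hm
  set cn : ℝ := Real.sqrt (2 * m) with hcn
  have hcnpos : 0 < cn := Real.sqrt_pos.2 (by positivity)
  refine ⟨(1/4) * (1 / (4 * cn)) ^ p, by positivity, ?_⟩
  intro o l h hl hh R₁ hR₁ R₂ hR₂ d
  set A : Mat (m+1) := R₂ - R₁ with hA
  obtain ⟨j₀, hj₀lt, hj₀⟩ := exists_good_column hn hR₁ hR₂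
  have hj₀m : (j₀ : ℕ) < m := by simpa using hj₀lt
  set ca : ℝ := Real.sqrt (∑ i, A i j₀ ^ 2) with hca
  have hca0 : 0 ≤ ca := Real.sqrt_nonneg _
  have hfrob0 : 0 ≤ frob A := Real.sqrt_nonneg _
  have hfrob_le : frob A ≤ cn * ca := by
    have h1 : frob A ^ 2 ≤ (cn * ca) ^ 2 := by
      rw [mul_pow, hcn, hca, Real.sq_sqrt (by positivity),
        Real.sq_sqrt (Finset.sum_nonneg fun i _ => sq_nonneg _)]
      have : ((m + 1 : ℕ) : ℝ) - 1 = (m : ℝ) := by push_cast; ring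
      calc frob A ^ 2 ≤ 2 * (((m+1:ℕ):ℝ) - 1) * ∑ i, A i j₀ ^ 2 := hj₀
        _ = 2 * (m:ℝ) * ∑ i, A i j₀ ^ 2 := by rw [this]
    nlinarith [mul_nonneg hcnpos.le hca0]
  -- the box data
  set w : Fin (m+1) → ℝ := fun i => if (i : ℕ) = m then h else l with hw
  have hwpos : ∀ i, 0 < w i := by
    intro i; rw [hw]; dsimp only; split <;> assumption
  set J : Fin (m+1) → Set ℝ := fun i => Ioo (o i) (o i + w i) with hJ
  set f : (Fin (m+1) → ℝ) → ℝ :=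
    fun x => Real.sqrt (∑ k, ((∑ j, A k j * x j) + d k) ^ 2) ^ p with hf
  have hf0 : ∀ x, 0 ≤ f x := fun x => Real.rpow_nonneg (Real.sqrt_nonneg _) p
  have hfc : Continuous f := by
    have h1 : Continuous fun x : Fin (m+1) → ℝ =>
        ∑ k, ((∑ j, A k j * x j) + d k) ^ 2 := by fun_prop
    exact h1.sqrt.rpow_const fun x => Or.inr hp0
  have hfm : Measurable f := hfc.measurable
  -- the set in the statement is the box
  have hSet : {x : Vec (m+1) |
      (∀ i : Fin (m+1), (i : ℕ) < (m+1) - 1 → x i ∈ Set.Ioo (o i) (o i + l)) ∧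
      coordLast x ∈ Set.Ioo (o ⟨(m+1) - 1, by omega⟩) (o ⟨(m+1) - 1, by omega⟩ + h)} =
      (WithLp.ofLp ⁻¹' (Set.univ.pi J : Set (Fin (m+1) → ℝ)) : Set (Vec (m+1))) := by
    ext x
    have hcoord : coordLast x = x ⟨m, by omega⟩ := by
      rw [coordLast, dif_pos (Nat.succ_pos m)]
      exact congrArg x (Fin.ext (Nat.succ_sub_one m))
    have hidx : (⟨m + 1 - 1, by omega⟩ : Fin (m+1)) = ⟨m, by omega⟩ := Fin.ext (Nat.succ_sub_one m)
    simp only [Set.mem_setOf_eq, Set.mem_preimage, Set.mem_pi, Set.mem_univ, forall_true_left, hcoord, hidx]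
    constructor
    · rintro ⟨h1, h2⟩
      intro i
      show x i ∈ Ioo (o i) (o i + if (i : ℕ) = m then h else l)
      rcases eq_or_ne (i : ℕ) m with hi | hi
      · rw [if_pos hi]
        have hieq : i = ⟨m, by omega⟩ := Fin.ext hi
        rw [hieq]
        exact h2
      · rw [if_neg hi]
        exact h1 i (by have := i.isLt; omega)
    · intro hx
      refine ⟨fun i hi => ?_, ?_⟩
      · have h2 : x i ∈ Ioo (o i) (o i + if (i : ℕ) = m then h else l) :=
          hx i
        rwa [if_neg (by omega : ¬ (i : ℕ) = m)] at h2
      · have h2 : x ⟨m, by omega⟩ ∈ Ioo (o ⟨m, by omega⟩)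
            (o ⟨m, by omega⟩ + if ((⟨m, by omega⟩ : Fin (m+1)) : ℕ) = m then h else l) :=
          hx ⟨m, by omega⟩
        rw [if_pos rfl] at h2
        exact h2
  rw [hSet]
  have hint_eq : ∀ x : Vec (m+1),
      (Real.sqrt (∑ k, (matVec A x k + d k) ^ 2)) ^ p = f (WithLp.ofLp x) := fun x => rfl
  simp only [hint_eq]
  set S : Set (Fin (m+1) → ℝ) := Set.univ.pi J with hS
  have hSmeas : MeasurableSet S := MeasurableSet.univ_pi fun i => measurableSet_Ioo
  -- convert Bochner integral to lintegral
  have hmeasvec : Measurable (fun x : Vec (m+1) => f (WithLp.ofLp x)) :=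
    hfm.comp (MeasurableEquiv.toLp 2 (Fin (m+1) → ℝ)).symm.measurable
  have hconv : ∫ x in WithLp.ofLp ⁻¹' S, f (WithLp.ofLp x) ∂(volume : Measure (Vec (m+1))) =
      (∫⁻ x in WithLp.ofLp ⁻¹' S, ENNReal.ofReal (f (WithLp.ofLp x)) ∂(volume : Measure (Vec (m+1)))).toReal :=
    MeasureTheory.integral_eq_lintegral_of_nonneg_ae
      (Filter.Eventually.of_forall fun x => hf0 x)
      (hmeasvec.aestronglyMeasurable)
  rw [hconv]
  -- move to the pi measure
  have hlift : ∫⁻ a in WithLp.ofLp ⁻¹' S, ENNReal.ofReal (f (WithLp.ofLp a)) ∂(volume : Measure (Vec (m+1))) =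
      ∫⁻ a in S, ENNReal.ofReal (f a) ∂(volume : Measure (Fin (m+1) → ℝ)) :=
    (EuclideanSpace.volume_preserving_symm_measurableEquiv_toLp
      (Fin (m+1))).setLIntegral_comp_preimage_emb
      (MeasurableEquiv.toLp 2 (Fin (m+1) → ℝ)).symm.measurableEmbedding
      (fun y => ENNReal.ofReal (f y)) S
  rw [hlift]
  -- Fubini: split off coordinate j₀
  set μ1 : Measure (Fin m → ℝ) := Measure.pi (fun _ => (volume : Measure ℝ)) with hμ1
  set B : Set (Fin m → ℝ) := Set.univ.pi (fun j => J (j₀.succAbove j)) with hB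
  set e := MeasurableEquiv.piFinSuccAbove (fun _ : Fin (m+1) => ℝ) j₀ with he
  have hesymm : ∀ z : ℝ × (Fin m → ℝ), e.symm z = j₀.insertNth z.1 z.2 := by
    intro z
    simp only [he, MeasurableEquiv.piFinSuccAbove_symm_apply]
    exact funext fun i => Fin.insertNthEquiv_apply _ _ _ _
  have hpre : S = e ⁻¹' ((J j₀) ×ˢ B) := by
    ext x
    have hex : e x = (x j₀, fun j => x (j₀.succAbove j)) := by
      simp only [he, MeasurableEquiv.piFinSuccAbove_apply, Fin.insertNthEquiv_symm_apply]
      exact Prod.ext rfl (funext fun j => rfl)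
    simp only [hS, Set.mem_preimage, hex, Set.mem_prod, Set.mem_pi, Set.mem_univ,
      forall_true_left, hB]
    constructor
    · intro hx
      exact ⟨hx j₀, fun j => hx _⟩
    · rintro ⟨h1, h2⟩ i
      rcases eq_or_ne i j₀ with rfl | hne
      · exact h1
      · obtain ⟨j, rfl⟩ := Fin.exists_succAbove_eq hne
        exact h2 j
  have hmeasF : Measurable fun z : ℝ × (Fin m → ℝ) => ENNReal.ofReal (f (e.symm z)) :=
    (hfm.comp e.symm.measurable).ennreal_ofReal
  have hFub : ∫⁻ a in S, ENNReal.ofReal (f a) ∂(volume : Measure (Fin (m+1) → ℝ)) =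
      ∫⁻ y in B, ∫⁻ t in J j₀, ENNReal.ofReal (f (j₀.insertNth t y)) ∂volume ∂μ1 := by
    have hppi := measurePreserving_piFinSuccAbove
      (fun _ : Fin (m+1) => (volume : Measure ℝ)) j₀
    calc ∫⁻ a in S, ENNReal.ofReal (f a) ∂(volume : Measure (Fin (m+1) → ℝ))
        = ∫⁻ a in e ⁻¹' ((J j₀) ×ˢ B),
            (fun z => ENNReal.ofReal (f (e.symm z))) (e a)
            ∂(Measure.pi fun _ => (volume : Measure ℝ)) := by
          rw [← hpre, MeasureTheory.volume_pi]
          exact lintegral_congr fun a => by simp only [MeasurableEquiv.symm_apply_apply]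
      _ = ∫⁻ z in (J j₀) ×ˢ B, ENNReal.ofReal (f (e.symm z))
            ∂((volume : Measure ℝ).prod μ1) :=
          hppi.setLIntegral_comp_preimage_emb e.measurableEmbedding
            (fun z => ENNReal.ofReal (f (e.symm z))) ((J j₀) ×ˢ B)
      _ = ∫⁻ z, ENNReal.ofReal (f (e.symm z))
            ∂(((volume : Measure ℝ).restrict (J j₀)).prod (μ1.restrict B)) := by
          rw [Measure.prod_restrict]
      _ = ∫⁻ y, ∫⁻ t, ENNReal.ofReal (f (e.symm (t, y)))
            ∂((volume : Measure ℝ).restrict (J j₀)) ∂(μ1.restrict B) :=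
          lintegral_prod_symm _ hmeasF.aemeasurable
      _ = ∫⁻ y in B, ∫⁻ t in J j₀, ENNReal.ofReal (f (j₀.insertNth t y)) ∂volume ∂μ1 := by
          exact lintegral_congr fun y => lintegral_congr fun t => by rw [hesymm]
  rw [hFub]
  -- the inner integral bound
  set K : ENNReal := ENNReal.ofReal ((l/4) * ((l/4) * ca) ^ p) with hK
  have hinner : ∀ y : Fin m → ℝ,
      K ≤ ∫⁻ t in J j₀, ENNReal.ofReal (f (j₀.insertNth t y)) ∂volume := by
    intro y
    have hJj₀ : J j₀ = Ioo (o j₀) (o j₀ + l) := by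
      simp only [hJ]
      rw [show w j₀ = l from if_neg (by omega : ¬ (j₀ : ℕ) = m)]
    have hfy : ∀ t : ℝ, f (j₀.insertNth t y) =
        Real.sqrt (∑ k, (t * A k j₀ + ((∑ j, A k (j₀.succAbove j) * y j) + d k)) ^ 2) ^ p := by
      intro t
      have hsum : ∀ k, ∑ j, A k j * (j₀.insertNth t y : Fin (m+1) → ℝ) j =
          t * A k j₀ + ∑ j, A k (j₀.succAbove j) * y j := by
        intro k
        rw [Fin.sum_univ_succAbove
          (fun j => A k j * (j₀.insertNth t y : Fin (m+1) → ℝ) j) j₀,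
          Fin.insertNth_apply_same]
        have hy : ∀ j : Fin m, (j₀.insertNth t y : Fin (m+1) → ℝ) (j₀.succAbove j) = y j :=
          fun j => Fin.insertNth_apply_succAbove (α := fun _ => ℝ) j₀ t y j
        rw [Finset.sum_congr rfl fun j _ => by rw [hy j]]
        ring
      simp only [hf, hsum, add_assoc]
    rw [hJj₀]
    simp only [hfy]
    exact oneD_lintegral p hp (fun k => A k j₀)
      (fun k => (∑ j, A k (j₀.succAbove j) * y j) + d k) (o j₀) l hl
  -- measure of B
  set Prest : ℝ := ∏ j, w (j₀.succAbove j) with hPrest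
  have hPrest_pos : 0 < Prest := Finset.prod_pos fun j _ => hwpos _
  have hB_vol : μ1 B = ENNReal.ofReal Prest := by
    rw [hB, hμ1, Measure.pi_pi, hPrest, ENNReal.ofReal_prod_of_nonneg fun j _ => (hwpos _).le]
    refine Finset.prod_congr rfl fun j _ => ?_
    simp only [hJ]
    rw [Real.volume_Ioo, add_sub_cancel_left]
  have houter : K * ENNReal.ofReal Prest ≤
      ∫⁻ y in B, (∫⁻ t in J j₀, ENNReal.ofReal (f (j₀.insertNth t y)) ∂volume) ∂μ1 := by
    calc K * ENNReal.ofReal Prest = K * μ1 B := by rw [hB_vol]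
      _ = ∫⁻ _y in B, K ∂μ1 := (setLIntegral_const B K).symm
      _ ≤ _ := lintegral_mono fun y => hinner y
  -- finiteness
  have hfin : (∫⁻ y in B, (∫⁻ t in J j₀, ENNReal.ofReal (f (j₀.insertNth t y)) ∂volume) ∂μ1) ≠ ⊤ := by
    rw [← hFub]
    set Mb : ℝ := Real.sqrt (∑ k, ((∑ j, |A k j| * (|o j| + w j)) + |d k|) ^ 2) ^ p with hMb
    have hbd : ∀ x ∈ S, ENNReal.ofReal (f x) ≤ ENNReal.ofReal Mb := by
      intro x hx
      apply ENNReal.ofReal_le_ofReal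
      rw [hf, hMb]
      apply Real.rpow_le_rpow (Real.sqrt_nonneg _) _ hp0
      apply Real.sqrt_le_sqrt
      apply Finset.sum_le_sum
      intro k _
      have hxbd : ∀ j, |x j| ≤ |o j| + w j := by
        intro j
        have hxj : x j ∈ Ioo (o j) (o j + w j) := by
          have := hx j (Set.mem_univ j)
          simpa only [hJ] using this
        rw [abs_le]
        constructor
        · have := neg_abs_le (o j)
          have := (hwpos j).le
          nlinarith [hxj.1]
        · have := le_abs_self (o j)
          linarith [hxj.2]
      have habs : |(∑ j, A k j * x j) + d k| ≤ (∑ j, |A k j| * (|o j| + w j)) + |d k| := by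
        calc |(∑ j, A k j * x j) + d k| ≤ |∑ j, A k j * x j| + |d k| := abs_add_le _ _
          _ ≤ (∑ j, |A k j * x j|) + |d k| := by
              gcongr
              exact Finset.abs_sum_le_sum_abs _ _
          _ ≤ (∑ j, |A k j| * (|o j| + w j)) + |d k| := by
              gcongr with j hj
              rw [abs_mul]
              exact mul_le_mul_of_nonneg_left (hxbd j) (abs_nonneg _)
      have hb0 : (0:ℝ) ≤ (∑ j, |A k j| * (|o j| + w j)) + |d k| :=
        le_trans (abs_nonneg _) habs
      have := abs_le.1 habs
      nlinarith [this.1, this.2]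
    have hSfin : (Measure.pi fun _ : Fin (m+1) => (volume : Measure ℝ)) S ≠ ⊤ := by
      rw [hS, Measure.pi_pi]
      refine (ENNReal.prod_lt_top fun i _ => ?_).ne
      simp only [hJ]
      rw [Real.volume_Ioo]
      exact ENNReal.ofReal_lt_top
    have : ∫⁻ a in S, ENNReal.ofReal (f a) ∂(volume : Measure (Fin (m+1) → ℝ)) ≤
        ENNReal.ofReal Mb * (Measure.pi fun _ : Fin (m+1) => (volume : Measure ℝ)) S := by
      calc ∫⁻ a in S, ENNReal.ofReal (f a) ∂(volume : Measure (Fin (m+1) → ℝ))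
          ≤ ∫⁻ _a in S, ENNReal.ofReal Mb ∂(volume : Measure (Fin (m+1) → ℝ)) :=
            setLIntegral_mono' hSmeas hbd
        _ = ENNReal.ofReal Mb * (volume : Measure (Fin (m+1) → ℝ)) S := setLIntegral_const _ _
        _ = _ := by rw [MeasureTheory.volume_pi]
    exact (lt_of_le_of_lt this (ENNReal.mul_lt_top ENNReal.ofReal_lt_top
      (lt_top_iff_ne_top.2 hSfin))).ne
  -- the real-number inequality
  have hlP : l * Prest = l ^ m * h := by
    have h1 : ∏ i, w i = l ^ m * h := by
      rw [Fin.prod_univ_castSucc]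
      have hlast : w (Fin.last m) = h := if_pos rfl
      have hcs : ∀ i : Fin m, w i.castSucc = l := fun i =>
        if_neg (by have := i.isLt; simp only [Fin.coe_castSucc]; omega)
      rw [hlast, Finset.prod_congr rfl fun i _ => hcs i, Finset.prod_const, Finset.card_univ,
        Fintype.card_fin]
    have h2 : ∏ i, w i = w j₀ * Prest := Fin.prod_univ_succAbove w j₀
    have hwj₀ : w j₀ = l := if_neg (by omega : ¬ (j₀ : ℕ) = m)
    rw [← h1, h2, hwj₀]
  have hreal : (1/4) * (1/(4*cn)) ^ p * l ^ p * (l ^ m * h) * frob A ^ p ≤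
      (l/4) * ((l/4) * ca) ^ p * Prest := by
    have hfp : frob A ^ p ≤ cn ^ p * ca ^ p := by
      rw [← Real.mul_rpow hcnpos.le hca0]
      exact Real.rpow_le_rpow hfrob0 hfrob_le hp0
    have e1 : ((l/4) * ca) ^ p = l ^ p * (1/4:ℝ) ^ p * ca ^ p := by
      rw [show (l/4) * ca = l * ((1/4) * ca) by ring, Real.mul_rpow hl.le (by positivity),
        Real.mul_rpow (by norm_num) hca0, ← mul_assoc]
    have e2 : ((1:ℝ)/(4*cn)) ^ p = (1/4:ℝ) ^ p * (1/cn) ^ p := by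
      rw [show (1:ℝ)/(4*cn) = (1/4) * (1/cn) by field_simp,
        Real.mul_rpow (by norm_num) (by positivity)]
    have e3 : ((1:ℝ)/cn) ^ p * cn ^ p = 1 := by
      rw [← Real.mul_rpow (by positivity) hcnpos.le, one_div_mul_cancel hcnpos.ne',
        Real.one_rpow]
    calc (1/4) * (1/(4*cn)) ^ p * l ^ p * (l ^ m * h) * frob A ^ p
        ≤ (1/4) * (1/(4*cn)) ^ p * l ^ p * (l ^ m * h) * (cn ^ p * ca ^ p) := by
          apply mul_le_mul_of_nonneg_left hfp
          positivity
      _ = (1/4) * (1/4:ℝ) ^ p * l ^ p * (l * Prest) * ca ^ p * ((1/cn) ^ p * cn ^ p) := by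
          rw [e2, hlP]; ring
      _ = (l/4) * ((l/4) * ca) ^ p * Prest := by
          rw [e3, e1]; ring
  -- finish
  have hprod_nonneg : (0:ℝ) ≤ (l/4) * ((l/4) * ca) ^ p * Prest := by positivity
  have hchain : ENNReal.ofReal ((l/4) * ((l/4) * ca) ^ p * Prest) ≤
      ∫⁻ y in B, (∫⁻ t in J j₀, ENNReal.ofReal (f (j₀.insertNth t y)) ∂volume) ∂μ1 := by
    calc ENNReal.ofReal ((l/4) * ((l/4) * ca) ^ p * Prest)
        = K * ENNReal.ofReal Prest := by
          rw [hK, ENNReal.ofReal_mul (by positivity)]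
      _ ≤ _ := houter
  calc (1/4) * (1/(4*cn)) ^ p * l ^ p * (l ^ (m + 1 - 1) * h) * frob A ^ p
      = (1/4) * (1/(4*cn)) ^ p * l ^ p * (l ^ m * h) * frob A ^ p := by norm_num
    _ ≤ (l/4) * ((l/4) * ca) ^ p * Prest := hreal
    _ = (ENNReal.ofReal ((l/4) * ((l/4) * ca) ^ p * Prest)).toReal :=
        (ENNReal.toReal_ofReal hprod_nonneg).symm
    _ ≤ _ := ENNReal.toReal_mono hfin hchain

end LayeredRigidity
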